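/- Let k⟨x_1,...,x_n⟩ be the free graded algebra with each x_i in degree 1, and let ∂ be the unique degree-1 derivation (satisfying the graded Leibniz rule ∂(ab) = ∂(a)b + (-1)^{|a|} a ∂(b)) determined by ∂(x_i) = (x_1,...,x_n) M^i (x_1,...,x_n)^T for n×n matrices M^1,...,M^n. Then ∂∘∂ = 0 (i.e., (k⟨x_1,...,x_n⟩, ∂) is a cochain DG algebra) if and only if the tuple (M^1,...,M^n) is crisscross, that is, ∑_{k=1}^n [c_j^k r_k^i − c_k^i r_j^k] = 0 (the n×n zero matrix) for all i,j ∈ {1,...,n}, where c_j^i denotes the j-th column and r_j^i the j-th row of M^i. -/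

import Mathlib

/-- The degree-`i` homogeneous component of the free algebra `k⟨x_1,...,x_n⟩`
with all generators in degree `1`: the span of the words of length `i`. -/
noncomputable def deg (k : Type*) [CommRing k] (n : ℕ) (i : ℕ) :
    Submodule k (FreeAlgebra k (Fin n)) :=
  Submodule.span k
    {w | ∃ f : Fin i → Fin n, w = (List.ofFn fun j => FreeAlgebra.ι k (f j)).prod}

section
variable {k : Type*} [CommRing k] {n : ℕ}

/-- abbreviation for words -/
noncomputable def wrd (k : Type*) [CommRing k] {n : ℕ} {m : ℕ} (f : Fin m → Fin n) :
    FreeAlgebra k (Fin n) := (List.ofFn fun j => FreeAlgebra.ι k (f j)).prod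

lemma wrd_mem_deg {m : ℕ} (f : Fin m → Fin n) : wrd k f ∈ deg k n m :=
  Submodule.subset_span ⟨f, rfl⟩

lemma wrd_mul_wrd {m m' : ℕ} (f : Fin m → Fin n) (g : Fin m' → Fin n) :
    wrd k f * wrd k g = wrd k (Fin.append f g) := by
  unfold wrd
  rw [show (List.ofFn fun j => FreeAlgebra.ι k (Fin.append f g j)) =
      List.ofFn (Fin.append (fun j => FreeAlgebra.ι k (f j)) (fun j => FreeAlgebra.ι k (g j))) by
    congr 1; funext j; exact (Fin.addCases (fun i => by simp) (fun i => by simp) j),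
    List.ofFn_fin_append, List.prod_append]

lemma one_mem_deg0 : (1 : FreeAlgebra k (Fin n)) ∈ deg k n 0 :=
  Submodule.subset_span ⟨fun j => j.elim0, by simp⟩

lemma gen_mem_deg1 (i : Fin n) : FreeAlgebra.ι k i ∈ deg k n 1 :=
  Submodule.subset_span ⟨fun _ => i, by simp⟩

lemma deg_mul {p q : ℕ} {a b : FreeAlgebra k (Fin n)} (ha : a ∈ deg k n p)
    (hb : b ∈ deg k n q) : a * b ∈ deg k n (p + q) := by
  induction ha using Submodule.span_induction with
  | mem x hx =>
    obtain ⟨f, rfl⟩ := hx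
    induction hb using Submodule.span_induction with
    | mem y hy =>
      obtain ⟨g, rfl⟩ := hy
      show wrd k f * wrd k g ∈ deg k n (_ + _)
      rw [wrd_mul_wrd f g]; exact wrd_mem_deg (Fin.append f g)
    | zero => simp
    | add y z _ _ hy hz => rw [mul_add]; exact add_mem hy hz
    | smul c y _ hy => rw [mul_smul_comm]; exact Submodule.smul_mem _ c hy
  | zero => simp
  | add y z _ _ hy hz => rw [add_mul]; exact add_mem hy hz
  | smul c y _ hy => rw [smul_mul_assoc]; exact Submodule.smul_mem _ c hy

lemma sum4_perm1 {M : Type*} [AddCommMonoid M] (F : Fin n → Fin n → Fin n → Fin n → M) :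
    (∑ a, ∑ b, ∑ c, ∑ e, F a b c e) = ∑ c, ∑ e, ∑ b, ∑ a, F a b c e := by
  have key : ∀ G : Fin n × Fin n × Fin n × Fin n → M,
      (∑ p : Fin n × Fin n × Fin n × Fin n, G p) =
        ∑ a, ∑ b, ∑ c, ∑ e, G (a, b, c, e) := by
    intro G; rw [Fintype.sum_prod_type]
    refine Finset.sum_congr rfl fun a _ => ?_
    rw [Fintype.sum_prod_type]
    refine Finset.sum_congr rfl fun b _ => ?_
    rw [Fintype.sum_prod_type]
  calc (∑ a, ∑ b, ∑ c, ∑ e, F a b c e)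
      = ∑ p : Fin n × Fin n × Fin n × Fin n, F p.1 p.2.1 p.2.2.1 p.2.2.2 :=
        (key fun p => F p.1 p.2.1 p.2.2.1 p.2.2.2).symm
    _ = ∑ p : Fin n × Fin n × Fin n × Fin n, F p.2.2.2 p.2.2.1 p.1 p.2.1 :=
        Fintype.sum_equiv
          ⟨fun p => (p.2.2.1, p.2.2.2, p.2.1, p.1), fun q => (q.2.2.2, q.2.2.1, q.1, q.2.1),
            fun p => rfl, fun q => rfl⟩ _ _ (fun p => rfl)
    _ = ∑ c, ∑ e, ∑ b, ∑ a, F a b c e := key fun p => F p.2.2.2 p.2.2.1 p.1 p.2.1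

lemma sum4_perm2 {M : Type*} [AddCommMonoid M] (F : Fin n → Fin n → Fin n → Fin n → M) :
    (∑ a, ∑ b, ∑ c, ∑ e, F a b c e) = ∑ a, ∑ c, ∑ e, ∑ b, F a b c e := by
  have key : ∀ G : Fin n × Fin n × Fin n × Fin n → M,
      (∑ p : Fin n × Fin n × Fin n × Fin n, G p) =
        ∑ a, ∑ b, ∑ c, ∑ e, G (a, b, c, e) := by
    intro G; rw [Fintype.sum_prod_type]
    refine Finset.sum_congr rfl fun a _ => ?_
    rw [Fintype.sum_prod_type]
    refine Finset.sum_congr rfl fun b _ => ?_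
    rw [Fintype.sum_prod_type]
  calc (∑ a, ∑ b, ∑ c, ∑ e, F a b c e)
      = ∑ p : Fin n × Fin n × Fin n × Fin n, F p.1 p.2.1 p.2.2.1 p.2.2.2 :=
        (key fun p => F p.1 p.2.1 p.2.2.1 p.2.2.2).symm
    _ = ∑ p : Fin n × Fin n × Fin n × Fin n, F p.1 p.2.2.2 p.2.1 p.2.2.1 :=
        Fintype.sum_equiv
          ⟨fun p => (p.1, p.2.2.1, p.2.2.2, p.2.1), fun q => (q.1, q.2.2.2, q.2.1, q.2.2.1),
            fun p => rfl, fun q => rfl⟩ _ _ (fun p => rfl)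
    _ = ∑ a, ∑ c, ∑ e, ∑ b, F a b c e := key fun p => F p.1 p.2.2.2 p.2.1 p.2.2.1

end

section
variable {k : Type*} [CommRing k] {n : ℕ}
open FreeAlgebra

lemma dd_gen (M : Fin n → Matrix (Fin n) (Fin n) k)
    (d : FreeAlgebra k (Fin n) →ₗ[k] FreeAlgebra k (Fin n))
    (hL : ∀ (p : ℕ) (a b : FreeAlgebra k (Fin n)), a ∈ deg k n p →
      d (a * b) = d a * b + ((-1 : k) ^ p) • (a * d b))
    (hval : ∀ i, d (ι k i) =
      ∑ a : Fin n, ∑ b : Fin n, M i a b • (ι k a * ι k b)) (i : Fin n) :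
    d (d (ι k i)) = ∑ u : Fin n, ∑ v : Fin n, ∑ w : Fin n,
      (∑ l, (M l u v * M i l w - M i u l * M l v w)) • (ι k u * ι k v * ι k w) := by
  have hd2 : ∀ a b : Fin n, d (ι k a * ι k b) = d (ι k a) * ι k b - ι k a * d (ι k b) := by
    intro a b
    rw [hL 1 (ι k a) (ι k b) (gen_mem_deg1 a), pow_one, neg_one_smul, ← sub_eq_add_neg]
  calc d (d (ι k i))
      = ∑ a, ∑ b, M i a b • ((∑ c, ∑ e, M a c e • (ι k c * ι k e)) * ι k b
          - ι k a * (∑ c, ∑ e, M b c e • (ι k c * ι k e))) := by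
        rw [hval i, map_sum]
        refine Finset.sum_congr rfl fun a _ => ?_
        rw [map_sum]
        refine Finset.sum_congr rfl fun b _ => ?_
        rw [map_smul, hd2, hval, hval]
    _ = ∑ a, ∑ b, ∑ c, ∑ e, ((M i a b * M a c e) • (ι k c * ι k e * ι k b)
          - (M i a b * M b c e) • (ι k a * (ι k c * ι k e))) := by
        simp_rw [Finset.sum_mul, Finset.mul_sum, smul_mul_assoc, mul_smul_comm, smul_sub,
          Finset.smul_sum, smul_smul, Finset.sum_sub_distrib]
    _ = (∑ a, ∑ b, ∑ c, ∑ e, (M i a b * M a c e) • (ι k c * ι k e * ι k b))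
          - ∑ a, ∑ b, ∑ c, ∑ e, (M i a b * M b c e) • (ι k a * (ι k c * ι k e)) := by
        simp_rw [Finset.sum_sub_distrib]
    _ = ∑ u, ∑ v, ∑ w, ∑ l, ((M l u v * M i l w) • (ι k u * ι k v * ι k w)
          - (M i u l * M l v w) • (ι k u * ι k v * ι k w)) := by
        rw [sum4_perm1 (fun a b c e => (M i a b * M a c e) • (ι k c * ι k e * ι k b)),
          sum4_perm2 (fun a b c e => (M i a b * M b c e) • (ι k a * (ι k c * ι k e))),
          ← Finset.sum_sub_distrib]
        refine Finset.sum_congr rfl fun u _ => ?_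
        rw [← Finset.sum_sub_distrib]
        refine Finset.sum_congr rfl fun v _ => ?_
        rw [← Finset.sum_sub_distrib]
        refine Finset.sum_congr rfl fun w _ => ?_
        rw [← Finset.sum_sub_distrib]
        refine Finset.sum_congr rfl fun l _ => ?_
        rw [mul_comm (M i l w), mul_assoc]
    _ = ∑ u, ∑ v, ∑ w, (∑ l, (M l u v * M i l w - M i u l * M l v w)) • (ι k u * ι k v * ι k w) := by
        simp_rw [Finset.sum_smul, sub_smul]
end

section
variable {k : Type*} [CommRing k] {n : ℕ}
open FreeAlgebra

lemma words_span_top (y : FreeAlgebra k (Fin n)) :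
    y ∈ Submodule.span k {w : FreeAlgebra k (Fin n) | ∃ (m : ℕ) (f : Fin m → Fin n), w = wrd k f} := by
  set S := Submodule.span k
      {w : FreeAlgebra k (Fin n) | ∃ (m : ℕ) (f : Fin m → Fin n), w = wrd k f} with hS
  have hone : (1 : FreeAlgebra k (Fin n)) ∈ S :=
    Submodule.subset_span ⟨0, fun j => j.elim0, by simp [wrd]⟩
  have hmul : ∀ a b : FreeAlgebra k (Fin n), a ∈ S → b ∈ S → a * b ∈ S := by
    intro a b ha hb
    induction ha using Submodule.span_induction with
    | mem x hx =>
      obtain ⟨m, f, rfl⟩ := hx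
      induction hb using Submodule.span_induction with
      | mem y hy =>
        obtain ⟨m', g, rfl⟩ := hy
        rw [wrd_mul_wrd f g]
        exact Submodule.subset_span ⟨m + m', Fin.append f g, rfl⟩
      | zero => simp
      | add y z _ _ hy hz => rw [mul_add]; exact add_mem hy hz
      | smul c y _ hy => rw [mul_smul_comm]; exact Submodule.smul_mem _ c hy
    | zero => simp
    | add y z _ _ hy hz => rw [add_mul]; exact add_mem hy hz
    | smul c y _ hy => rw [smul_mul_assoc]; exact Submodule.smul_mem _ c hy
  induction y using FreeAlgebra.induction with
  | grade0 r => rw [Algebra.algebraMap_eq_smul_one]; exact Submodule.smul_mem _ r hone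
  | grade1 x => exact Submodule.subset_span ⟨1, fun _ => x, by simp [wrd]⟩
  | mul a b ha hb => exact hmul a b ha hb
  | add a b ha hb => exact add_mem ha hb
end

open FreeAlgebra in
lemma triple_indep {k : Type*} [CommRing k] {n : ℕ} (C : Fin n → Fin n → Fin n → k)
    (h : ∑ u : Fin n, ∑ v : Fin n, ∑ w : Fin n,
        C u v w • (ι k u * ι k v * ι k w) = 0) :
    ∀ u v w, C u v w = 0 := by
  intro u0 v0 w0
  classical
  have h2 := congrArg (equivMonoidAlgebraFreeMonoid :
      FreeAlgebra k (Fin n) → MonoidAlgebra k (FreeMonoid (Fin n))) h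
  simp only [map_sum, map_smul, map_mul, equivMonoidAlgebraFreeMonoid, map_zero] at h2
  simp only [MonoidAlgebra.smul_single', mul_one,
    AlgEquiv.ofAlgHom_apply, MonoidAlgebra.of_apply, FreeAlgebra.lift_ι_apply,
    MonoidAlgebra.single_mul_single, one_mul] at h2
  rw [← Finset.sum_product'] at h2
  rw [← Finset.sum_product'] at h2
  have h3 := congrArg (fun f : MonoidAlgebra k (FreeMonoid (Fin n)) =>
      f.coeff (FreeMonoid.of u0 * FreeMonoid.of v0 * FreeMonoid.of w0)) h2
  beta_reduce at h3
  rw [MonoidAlgebra.coeff_sum, Finset.sum_apply'] at h3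
  simp only [MonoidAlgebra.coeff_single, MonoidAlgebra.coeff_zero, Finsupp.single_apply, Finsupp.coe_zero, Pi.zero_apply] at h3
  have hcond : ∀ u v w : Fin n,
      (FreeMonoid.of u * FreeMonoid.of v * FreeMonoid.of w =
        FreeMonoid.of u0 * FreeMonoid.of v0 * FreeMonoid.of w0) ↔ (((u, v), w) = ((u0, v0), w0)) := by
    intro u v w
    constructor
    · intro hh
      have := congrArg FreeMonoid.toList hh
      simp only [FreeMonoid.toList_mul, FreeMonoid.toList_of, List.cons_append,
        List.nil_append, List.cons.injEq, and_true] at this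
      simp [Prod.ext_iff, this.1, this.2.1, this.2.2]
    · intro hh
      obtain ⟨⟨e1, e2⟩, e3⟩ : (u = u0 ∧ v = v0) ∧ w = w0 := by simpa [Prod.ext_iff] using hh
      subst e1; subst e2; subst e3; rfl
  simp only [hcond] at h3
  rw [Finset.sum_eq_single ((u0, v0), w0) (fun b _ hb => by simp [hb]) (by simp)] at h3
  simpa using h3




/-- An ordered `n`-tuple `(M^1,…,M^n)` of `n×n` matrices is *crisscross* if
`∑_{l=1}^n [c_j^l r_l^i − c_l^i r_j^l] = 0` for all `i,j`, where `c^i_j` (resp.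
`r^i_j`) is the `j`-th column (resp. row) of `M^i`; entrywise this reads
`∑_l (M^l_{a j} M^i_{l b} − M^i_{a l} M^l_{j b}) = 0` for all `i,j,a,b`. -/
def crisscross {k : Type*} [CommRing k] {n : ℕ}
    (M : Fin n → Matrix (Fin n) (Fin n) k) : Prop :=
  ∀ i j a b : Fin n,
    ∑ l : Fin n, (M l a j * M i l b - M i a l * M l j b) = 0

/-- for the degree-1 derivation `∂` of `k⟨x₁,…,xₙ⟩` (generators
in degree 1, graded Leibniz rule) determined by
`∂(xᵢ) = (x₁,…,xₙ) Mⁱ (x₁,…,xₙ)ᵀ`, we have `∂∘∂ = 0` if and only if the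
tuple `(M¹,…,Mⁿ)` is crisscross. -/
theorem stmt1 {k : Type*} [Field k] [CharZero k] (n : ℕ)
    (M : Fin n → Matrix (Fin n) (Fin n) k)
    (d : FreeAlgebra k (Fin n) →ₗ[k] FreeAlgebra k (Fin n))
    (hL : ∀ (p : ℕ) (a b : FreeAlgebra k (Fin n)), a ∈ deg k n p →
      d (a * b) = d a * b + ((-1 : k) ^ p) • (a * d b))
    (hval : ∀ i, d (FreeAlgebra.ι k i) =
      ∑ a : Fin n, ∑ b : Fin n, M i a b • (FreeAlgebra.ι k a * FreeAlgebra.ι k b)) :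
    (∀ x, d (d x) = 0) ↔ crisscross M := by
  constructor
  · intro h i j a b
    have h0 := dd_gen M d hL hval i
    have h1 : (∑ u : Fin n, ∑ v : Fin n, ∑ w : Fin n,
        (∑ l, (M l u v * M i l w - M i u l * M l v w)) •
          (FreeAlgebra.ι k u * FreeAlgebra.ι k v * FreeAlgebra.ι k w)) = 0 := by
      rw [← h0]; exact h _
    exact triple_indep _ h1 a j b
  · intro hM
    have hgen : ∀ i, d (d (FreeAlgebra.ι k i)) = 0 := by
      intro i
      rw [dd_gen M d hL hval i]
      refine Finset.sum_eq_zero fun u _ => Finset.sum_eq_zero fun v _ =>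
        Finset.sum_eq_zero fun w _ => ?_
      rw [hM i v u w, zero_smul]
    have hone : d (1 : FreeAlgebra k (Fin n)) = 0 := by
      have h1 := hL 0 1 1 one_mem_deg0
      rw [one_mul, pow_zero, one_smul, mul_one, one_mul] at h1
      exact (left_eq_add.mp h1)
    have hword : ∀ (m : ℕ) (f : Fin m → Fin n),
        d (wrd k f) ∈ deg k n (m + 1) ∧ d (d (wrd k f)) = 0 := by
      intro m
      induction m with
      | zero =>
        intro f
        have hw : wrd k f = 1 := by simp [wrd]
        rw [hw, hone]
        exact ⟨Submodule.zero_mem _, by rw [map_zero]⟩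
      | succ m ih =>
        intro f
        have hw : wrd k f = FreeAlgebra.ι k (f 0) * wrd k (fun j => f j.succ) := by
          simp only [wrd, List.ofFn_succ, List.prod_cons]
        obtain ⟨hdb, hddb⟩ := ih (fun j => f j.succ)
        have hb : wrd k (fun j => f j.succ) ∈ deg k n m := wrd_mem_deg _
        have hda : d (FreeAlgebra.ι k (f 0)) ∈ deg k n 2 := by
          rw [hval]
          refine Submodule.sum_mem _ fun a _ => Submodule.sum_mem _ fun b _ =>
            Submodule.smul_mem _ _ ?_
          have h2 := deg_mul (gen_mem_deg1 (k := k) a) (gen_mem_deg1 b)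
          rwa [show (1 + 1 : ℕ) = 2 by omega] at h2
        have step : d (wrd k f) = d (FreeAlgebra.ι k (f 0)) * wrd k (fun j => f j.succ)
            - FreeAlgebra.ι k (f 0) * d (wrd k (fun j => f j.succ)) := by
          rw [hw, hL 1 _ _ (gen_mem_deg1 (f 0)), pow_one, neg_one_smul, ← sub_eq_add_neg]
        constructor
        · rw [step]
          refine sub_mem ?_ ?_
          · have h2 := deg_mul hda hb
            rwa [show (2 + m : ℕ) = m + 1 + 1 by omega] at h2
          · have h2 := deg_mul (gen_mem_deg1 (k := k) (f 0)) hdb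
            rwa [show (1 + (m + 1) : ℕ) = m + 1 + 1 by omega] at h2
        · rw [step, map_sub, hL 2 _ _ hda, hgen, hL 1 _ _ (gen_mem_deg1 (f 0)), hddb]
          simp
    intro x
    have hx := words_span_top x
    induction hx using Submodule.span_induction with
    | mem w hw =>
      obtain ⟨m, f, rfl⟩ := hw
      exact (hword m f).2
    | zero => simp
    | add y z _ _ hy hz => rw [map_add, map_add, hy, hz, add_zero]
    | smul c y _ hy => rw [map_smul, map_smul, hy, smul_zero]
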